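/- Let L be a finite set and for each x ∈ ℝ^d let P(x) = (p_{yy'}(x)) be a stochastic matrix on L such that: (i) each x ↦ p_{yy'}(x) is Lipschitz with constant K, and (ii) δ := inf_{x} min_{y,y'} p_{yy'}(x) > 0. Then for each x the chain has a unique stationary distribution π(x), and x ↦ π(x) is Lipschitz continuous in total variation, with Lipschitz constant depending only on K, δ and |L|. -/

import Mathlib

open Finset

/-- Contraction (Doeblin) estimate: applying a stochastic matrix with entries
bounded below by `δ` to a zero-sum vector contracts the ℓ¹ norm by `1 - |L|·δ`. -/
lemma contraction_aux {L : Type*} [Fintype L] (δ : ℝ) (q : L → L → ℝ)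
    (hq : ∀ y y', δ ≤ q y y') (hsum : ∀ y, ∑ y', q y y' = 1)
    (v : L → ℝ) (hv : ∑ y, v y = 0) :
    ∑ y', |∑ y, v y * q y y'| ≤ (1 - Fintype.card L * δ) * ∑ y, |v y| := by
  have key : ∀ y', ∑ y, v y * q y y' = ∑ y, v y * (q y y' - δ) := by
    intro y'
    simp [mul_sub, Finset.sum_sub_distrib, ← Finset.sum_mul, hv]
  calc ∑ y', |∑ y, v y * q y y'|
      ≤ ∑ y', ∑ y, |v y| * (q y y' - δ) := by
        refine Finset.sum_le_sum fun y' _ => ?_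
        rw [key y']
        refine (Finset.abs_sum_le_sum_abs _ _).trans (Finset.sum_le_sum fun y _ => ?_)
        rw [abs_mul, abs_of_nonneg (sub_nonneg.2 (hq y y'))]
    _ = (1 - Fintype.card L * δ) * ∑ y, |v y| := by
        rw [Finset.sum_comm]
        rw [Finset.mul_sum]
        refine Finset.sum_congr rfl fun y _ => ?_
        rw [← Finset.mul_sum, Finset.sum_sub_distrib, hsum y, Finset.sum_const, nsmul_eq_mul]
        simp only [Fintype.card]; ring

/-- Existence and uniqueness of the stationary distribution of a stochastic matrix
with entries bounded below by `δ > 0`, via the Banach fixed point theorem on the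
simplex inside the ℓ¹ space. -/
lemma exists_unique_stationary {L : Type*} [Fintype L] [Nonempty L] (δ : ℝ) (hδ : 0 < δ)
    (q : L → L → ℝ) (hq : ∀ y y', δ ≤ q y y') (hsum : ∀ y, ∑ y', q y y' = 1) :
    ∃ π : L → ℝ, (∀ y, 0 ≤ π y) ∧ (∑ y, π y = 1) ∧ (∀ y', ∑ y, π y * q y y' = π y') ∧
      ∀ π' : L → ℝ, (∀ y, 0 ≤ π' y) → (∑ y, π' y = 1) →
        (∀ y', ∑ y, π' y * q y y' = π' y') → π' = π := by
  set n := Fintype.card L with hn_def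
  have hn : 0 < n := Fintype.card_pos
  have hnδ : (n : ℝ) * δ ≤ 1 := by
    obtain ⟨y0⟩ := ‹Nonempty L›
    have h1 := hsum y0
    have h2 : ∑ y' : L, δ ≤ ∑ y' : L, q y0 y' := Finset.sum_le_sum fun y' _ => hq y0 y'
    rw [h1, Finset.sum_const, nsmul_eq_mul] at h2
    simpa using h2
  have hc0 : (0:ℝ) ≤ 1 - n * δ := by linarith
  have hc1 : (1:ℝ) - n * δ < 1 := by
    have : (0:ℝ) < n * δ := by positivity
    linarith
  -- the ℓ¹ space and the simplex
  let E := PiLp 1 (fun _ : L => ℝ)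
  let S : Set E := {f | (∀ y, 0 ≤ f y) ∧ ∑ y, f y = 1}
  have hSclosed : IsClosed S := by
    have : S = (PiLp.continuousLinearEquiv 1 ℝ (fun _ : L => ℝ)) ⁻¹' stdSimplex ℝ L :=
      rfl
    rw [this]
    exact (isClosed_stdSimplex ℝ L).preimage
      (PiLp.continuousLinearEquiv 1 ℝ (fun _ : L => ℝ)).continuous
  haveI : CompleteSpace S := hSclosed.completeSpace_coe
  haveI : Nonempty S := by
    refine ⟨⟨WithLp.toLp 1 (fun _ => (n : ℝ)⁻¹), fun y => by simp only [WithLp.ofLp_toLp]; positivity, ?_⟩⟩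
    simp only [WithLp.ofLp_toLp]
    rw [Finset.sum_const, nsmul_eq_mul, Finset.card_univ, ← hn_def]
    exact mul_inv_cancel₀ (Nat.cast_pos.mpr hn).ne'
  -- the transition map
  have Tmem : ∀ f : S, WithLp.toLp 1 (fun y' => ∑ y, f.1 y * q y y') ∈ S := by
    rintro ⟨f, hf0, hf1⟩
    constructor
    · intro y'
      exact Finset.sum_nonneg fun y _ => mul_nonneg (hf0 y) (hδ.le.trans (hq y y'))
    · simp only [WithLp.ofLp_toLp]
      rw [Finset.sum_comm]
      calc ∑ y, ∑ y', f y * q y y' = ∑ y, f y * ∑ y', q y y' := by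
            simp [Finset.mul_sum]
        _ = 1 := by simp only [hsum, mul_one]; exact hf1
  let T : S → S := fun f => ⟨WithLp.toLp 1 (fun y' => ∑ y, f.1 y * q y y'), Tmem f⟩
  -- distance formula
  have hdist : ∀ a b : S, dist a b = ∑ y, |a.1 y - b.1 y| := by
    intro a b
    rw [Subtype.dist_eq, PiLp.dist_eq_sum (by norm_num)]
    simp [Real.dist_eq]
  have hcontr : ContractingWith ⟨1 - n * δ, hc0⟩ T := by
    constructor
    · exact_mod_cast hc1
    · refine LipschitzWith.of_dist_le_mul fun a b => ?_
      rw [hdist, hdist]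
      have hv : ∑ y, (a.1 y - b.1 y) = 0 := by
        rw [Finset.sum_sub_distrib, a.2.2, b.2.2, sub_self]
      have := contraction_aux δ q hq hsum (fun y => a.1 y - b.1 y) hv
      calc ∑ y', |(T a).1 y' - (T b).1 y'|
          = ∑ y', |∑ y, (a.1 y - b.1 y) * q y y'| := by
            refine Finset.sum_congr rfl fun y' _ => ?_
            congr 1
            simp only [T, WithLp.ofLp_toLp, Finset.sum_sub_distrib, sub_mul]
        _ ≤ (1 - n * δ) * ∑ y, |a.1 y - b.1 y| := this
  -- fixed point
  let πS := hcontr.fixedPoint T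
  have hfix : T πS = πS := hcontr.fixedPoint_isFixedPt
  refine ⟨πS.1, πS.2.1, πS.2.2, ?_, ?_⟩
  · intro y'
    exact congrFun (congrArg (fun f : S => f.1.ofLp) hfix) y'
  · intro π' h0 h1 hstat
    have hmem : WithLp.toLp 1 π' ∈ S := ⟨h0, h1⟩
    have : T ⟨WithLp.toLp 1 π', hmem⟩ = ⟨WithLp.toLp 1 π', hmem⟩ :=
      Subtype.ext (congrArg (WithLp.toLp 1) (funext hstat))
    have := hcontr.fixedPoint_unique this
    exact congrArg (fun f : S => f.1.ofLp) this

theorem stationary_distribution_lipschitz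
    {L : Type*} [Fintype L] [Nonempty L] (K δ : ℝ) (hδ : 0 < δ) :
    ∃ K' : ℝ, ∀ (d : ℕ) (p : EuclideanSpace ℝ (Fin d) → L → L → ℝ),
      (∀ x y y', 0 ≤ p x y y') →
      (∀ x y, ∑ y', p x y y' = 1) →
      (∀ x x' y y', |p x y y' - p x' y y'| ≤ K * ‖x - x'‖) →
      (∀ x y y', δ ≤ p x y y') →
      ∃ π : EuclideanSpace ℝ (Fin d) → L → ℝ,
        (∀ x, (∀ y, 0 ≤ π x y) ∧ (∑ y, π x y = 1) ∧
          (∀ y', ∑ y, π x y * p x y y' = π x y')) ∧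
        (∀ x (π' : L → ℝ), (∀ y, 0 ≤ π' y) → (∑ y, π' y = 1) →
          (∀ y', ∑ y, π' y * p x y y' = π' y') → π' = π x) ∧
        (∀ x x', ∑ y, |π x y - π x' y| ≤ K' * ‖x - x'‖) := by
  refine ⟨|K| / δ, ?_⟩
  intro d p hpos hsum hlip hlb
  choose π h0 h1 h2 h3 using fun x =>
    exists_unique_stationary δ hδ (p x) (hlb x) (hsum x)
  refine ⟨π, fun x => ⟨h0 x, h1 x, h2 x⟩, h3, ?_⟩
  intro x x'
  set n := Fintype.card L with hn_def
  have hn : 0 < n := Fintype.card_pos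
  set D := ∑ y, |π x y - π x' y| with hD
  have hv : ∑ y, (π x y - π x' y) = 0 := by
    rw [Finset.sum_sub_distrib, h1 x, h1 x', sub_self]
  have hKnn : 0 ≤ K * ‖x - x'‖ := (abs_nonneg _).trans
    (hlip x x' (Classical.arbitrary L) (Classical.arbitrary L))
  have step : D ≤ (1 - n * δ) * D + n * (K * ‖x - x'‖) := by
    have split : ∀ y', π x y' - π x' y' =
        (∑ y, (π x y - π x' y) * p x y y') + ∑ y, π x' y * (p x y y' - p x' y y') := by
      intro y'
      rw [← h2 x y', ← h2 x' y']
      rw [Finset.sum_sub_distrib] at *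
      simp only [sub_mul, mul_sub, Finset.sum_sub_distrib]
      ring
    calc D = ∑ y', |(∑ y, (π x y - π x' y) * p x y y')
              + ∑ y, π x' y * (p x y y' - p x' y y')| := by
          refine Finset.sum_congr rfl fun y' _ => ?_; rw [split y']
      _ ≤ (∑ y', |∑ y, (π x y - π x' y) * p x y y'|)
            + ∑ y', |∑ y, π x' y * (p x y y' - p x' y y')| := by
          rw [← Finset.sum_add_distrib]
          exact Finset.sum_le_sum fun y' _ => abs_add_le _ _
      _ ≤ (1 - n * δ) * D + n * (K * ‖x - x'‖) := by
          gcongr ?_ + ?_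
          · exact contraction_aux δ (p x) (hlb x) (hsum x) _ hv
          · calc ∑ y', |∑ y, π x' y * (p x y y' - p x' y y')|
                ≤ ∑ y' : L, K * ‖x - x'‖ := by
                  refine Finset.sum_le_sum fun y' _ => ?_
                  refine (Finset.abs_sum_le_sum_abs _ _).trans ?_
                  calc ∑ y, |π x' y * (p x y y' - p x' y y')|
                      ≤ ∑ y, π x' y * (K * ‖x - x'‖) := by
                        refine Finset.sum_le_sum fun y _ => ?_
                        rw [abs_mul, abs_of_nonneg (h0 x' y)]
                        exact mul_le_mul_of_nonneg_left (hlip x x' y y') (h0 x' y)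
                    _ = K * ‖x - x'‖ := by
                        rw [← Finset.sum_mul, h1 x', one_mul]
              _ = n * (K * ‖x - x'‖) := by
                  rw [Finset.sum_const, nsmul_eq_mul]; rfl
  have hDnn : 0 ≤ D := Finset.sum_nonneg fun y _ => abs_nonneg _
  have hδD : (n:ℝ) * δ * D ≤ n * (K * ‖x - x'‖) := by nlinarith
  have hD' : δ * D ≤ K * ‖x - x'‖ := by
    have hn' : (0:ℝ) < n := by exact_mod_cast hn
    nlinarith
  rw [div_mul_eq_mul_div, le_div_iff₀ hδ]
  calc D * δ = δ * D := by ring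
    _ ≤ K * ‖x - x'‖ := hD'
    _ ≤ |K| * ‖x - x'‖ := mul_le_mul_of_nonneg_right (le_abs_self K) (norm_nonneg _)
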